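/- Let (Λ_j, T_j)_{j ∈ -ℕ} be an inverse sequence where each Λ_j is the nonnegative cone in ℝ^{d_j} and T_j is a nonnegative linear map, and suppose there is a strictly decreasing sequence of indices (J_k) with d_{J_k} = d for all k and a fixed positive d × d matrix L with L = T_{J_{2k-1}} ∘ ⋯ ∘ T_{J_{2k}} for every k. Then the inverse limit of the sequence of cones is at most one-dimensional: any two elements are nonnegative scalar multiples of a common element. -/

import Mathlib

section MatrixAux
variable {dd : ℕ} (L : Matrix (Fin dd) (Fin dd) ℝ)

lemma aux_mulVec_nonneg (hL : ∀ i j, 0 ≤ L i j) {x : Fin dd → ℝ}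
    (hx : ∀ i, 0 ≤ x i) (i : Fin dd) : 0 ≤ L.mulVec x i := by
  simp only [Matrix.mulVec, dotProduct]
  exact Finset.sum_nonneg fun j _ => mul_nonneg (hL i j) (hx j)

lemma aux_mulVec_pos (hL : ∀ i j, 0 < L i j) {x : Fin dd → ℝ}
    (hx : ∀ i, 0 ≤ x i) (hx0 : ∃ i, x i ≠ 0) (i : Fin dd) :
    0 < L.mulVec x i := by
  obtain ⟨j0, hj0⟩ := hx0
  simp only [Matrix.mulVec, dotProduct]
  refine Finset.sum_pos' (fun j _ => mul_nonneg (hL i j).le (hx j)) ⟨j0, Finset.mem_univ _, ?_⟩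
  exact mul_pos (hL i j0) (lt_of_le_of_ne (hx j0) (Ne.symm hj0))

lemma aux_mulVec_mono (hL : ∀ i j, 0 ≤ L i j) {x y : Fin dd → ℝ}
    (h : ∀ k, x k ≤ y k) (i : Fin dd) : L.mulVec x i ≤ L.mulVec y i := by
  simp only [Matrix.mulVec, dotProduct]
  exact Finset.sum_le_sum fun k _ => mul_le_mul_of_nonneg_left (h k) (hL i k)

lemma aux_cross {δ Δ : ℝ} (hδ : 0 < δ) (h1 : ∀ i j, δ ≤ L i j)
    (h2 : ∀ i j, L i j ≤ Δ) {x : Fin dd → ℝ} (hx : ∀ i, 0 ≤ x i)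
    (i j : Fin dd) : δ * L.mulVec x i ≤ Δ * L.mulVec x j := by
  have hΔ : 0 < Δ := lt_of_lt_of_le (hδ.trans_le (h1 i i)) (h2 i i)
  simp only [Matrix.mulVec, dotProduct, Finset.mul_sum]
  refine Finset.sum_le_sum fun k _ => ?_
  calc δ * (L i k * x k) ≤ δ * (Δ * x k) :=
        mul_le_mul_of_nonneg_left (mul_le_mul_of_nonneg_right (h2 i k) (hx k)) hδ.le
    _ = Δ * (δ * x k) := by ring
    _ ≤ Δ * (L j k * x k) :=
        mul_le_mul_of_nonneg_left (mul_le_mul_of_nonneg_right (h1 j k) (hx k)) hΔ.le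

lemma aux_ratio {δ Δ : ℝ} (hδ : 0 < δ) (h1 : ∀ i j, δ ≤ L i j)
    (h2 : ∀ i j, L i j ≤ Δ) {x y : Fin dd → ℝ}
    (hx : ∀ i, 0 ≤ x i) (hy : ∀ i, 0 ≤ y i) (hyne : ∃ i, y i ≠ 0)
    (i j : Fin dd) :
    L.mulVec x i / L.mulVec y i ≤ (Δ ^ 2 / δ ^ 2) * (L.mulVec x j / L.mulVec y j) := by
  have hLpos : ∀ i j, 0 < L i j := fun i j => hδ.trans_le (h1 i j)
  have hΔ : 0 < Δ := lt_of_lt_of_le hδ ((h1 i i).trans (h2 i i))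
  have hypos : ∀ i, 0 < L.mulVec y i := aux_mulVec_pos L hLpos hy hyne
  have hxnn : ∀ i, 0 ≤ L.mulVec x i := aux_mulVec_nonneg L (fun i j => (hLpos i j).le) hx
  have hc1 : δ * L.mulVec x i ≤ Δ * L.mulVec x j := aux_cross L hδ h1 h2 hx i j
  have hc2 : δ * L.mulVec y j ≤ Δ * L.mulVec y i := aux_cross L hδ h1 h2 hy j i
  rw [mul_comm, div_mul_div_comm, div_le_div_iff₀ (hypos i) (mul_pos (hypos j) (pow_pos hδ 2))]
  have hmul : (δ * L.mulVec x i) * (δ * L.mulVec y j)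
      ≤ (Δ * L.mulVec x j) * (Δ * L.mulVec y i) :=
    mul_le_mul hc1 hc2 (mul_nonneg hδ.le (hypos j).le) (mul_nonneg hΔ.le (hxnn j))
  nlinarith [hmul]

lemma aux_contract {δ Δ : ℝ} (hδ : 0 < δ) (h1 : ∀ i j, δ ≤ L i j)
    (h2 : ∀ i j, L i j ≤ Δ)
    {a b : Fin dd → ℝ} (hb : ∀ i, 0 ≤ b i)
    (hbne : ∃ i, b i ≠ 0)
    {lam mu : ℝ} (hlam : ∀ i, lam * b i ≤ a i) (hmu : ∀ i, a i ≤ mu * b i)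
    (i j : Fin dd) :
    L.mulVec a i / L.mulVec b i - L.mulVec a j / L.mulVec b j
      ≤ (1 - (δ / Δ) ^ 2) * (mu - lam) := by
  have hdd : Nonempty (Fin dd) := ⟨hbne.choose⟩
  have hΔ : 0 < Δ := by
    obtain ⟨i0⟩ := hdd
    exact lt_of_lt_of_le (hδ.trans_le (h1 i0 i0)) (h2 i0 i0)
  have hLpos : ∀ i j, 0 < L i j := fun i j => hδ.trans_le (h1 i j)
  have hLnn : ∀ i j, 0 ≤ L i j := fun i j => (hLpos i j).le
  set r : Fin dd → ℝ := fun k => a k - lam * b k with hrdef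
  have hr : ∀ k, 0 ≤ r k := fun k => by simp [hrdef]; linarith [hlam k]
  have hr2 : ∀ k, r k ≤ (mu - lam) * b k := fun k => by
    simp only [hrdef]; nlinarith [hmu k]
  have hbpos : ∀ i, 0 < L.mulVec b i := aux_mulVec_pos L hLpos hb hbne
  have hs_eq : ∀ i, L.mulVec r i = L.mulVec a i - lam * L.mulVec b i := by
    intro i
    have : r = a - lam • b := by funext k; simp [hrdef]
    rw [this, Matrix.mulVec_sub, Matrix.mulVec_smul]
    simp [smul_eq_mul]
  have hs_nn : ∀ i, 0 ≤ L.mulVec r i := aux_mulVec_nonneg L hLnn hr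
  have hs_ub : ∀ i, L.mulVec r i ≤ (mu - lam) * L.mulVec b i := by
    intro i
    have h3 : L.mulVec r i ≤ L.mulVec ((mu - lam) • b) i :=
      aux_mulVec_mono L hLnn (fun k => by simpa [smul_eq_mul] using hr2 k) i
    rw [Matrix.mulVec_smul] at h3
    simpa using h3
  have hratio : ∀ i, L.mulVec a i / L.mulVec b i = lam + L.mulVec r i / L.mulVec b i := by
    intro i
    have hb0 := (hbpos i).ne'
    rw [hs_eq i]
    field_simp
    ring
  rw [hratio i, hratio j]
  have hcross_r : δ * L.mulVec r i ≤ Δ * L.mulVec r j := aux_cross L hδ h1 h2 hr i j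
  have hcross_b : δ * L.mulVec b j ≤ Δ * L.mulVec b i := aux_cross L hδ h1 h2 hb j i
  set ti := L.mulVec r i / L.mulVec b i with htidef
  set tj := L.mulVec r j / L.mulVec b j with htjdef
  have hti_ub : ti ≤ mu - lam := by
    rw [htidef, div_le_iff₀ (hbpos i)]
    linarith [hs_ub i]
  have hti_nn : 0 ≤ ti := div_nonneg (hs_nn i) (hbpos i).le
  have htj_ge : (δ / Δ) ^ 2 * ti ≤ tj := by
    rw [htidef, htjdef, div_pow, div_mul_div_comm, div_le_div_iff₀
      (mul_pos (pow_pos hΔ 2) (hbpos i)) (hbpos j)]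
    have hmul : (δ * L.mulVec r i) * (δ * L.mulVec b j)
        ≤ (Δ * L.mulVec r j) * (Δ * L.mulVec b i) :=
      mul_le_mul hcross_r hcross_b
        (mul_nonneg hδ.le (hbpos j).le)
        (mul_nonneg hΔ.le (aux_mulVec_nonneg L hLnn hr j))
    nlinarith [hmul]
  have hθ : (δ / Δ) ^ 2 ≤ 1 := by
    have : δ / Δ ≤ 1 := (div_le_one hΔ).2 (by
      obtain ⟨i0⟩ := hdd; exact (h1 i0 i0).trans (h2 i0 i0))
    nlinarith [div_nonneg hδ.le hΔ.le]
  nlinarith [htj_ge, hti_ub, hti_nn]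
end MatrixAux

/-- Composition of the connecting linear maps from level `i + k` down to
level `i`: `compFrom d A i 0 = id` and
`compFrom d A i (k+1) = compFrom d A i k ∘ A (i+k)`. -/
def compFrom (d : ℕ → ℕ)
    (A : ∀ j, (Fin (d (j + 1)) → ℝ) →ₗ[ℝ] (Fin (d j) → ℝ)) (i : ℕ) :
    ∀ k : ℕ, (Fin (d (i + k)) → ℝ) →ₗ[ℝ] (Fin (d i) → ℝ)
  | 0 => LinearMap.id
  | k + 1 => (compFrom d A i k).comp (A (i + k))

section CF
variable (d : ℕ → ℕ) (A : ∀ j, (Fin (d (j + 1)) → ℝ) →ₗ[ℝ] (Fin (d j) → ℝ))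

lemma compFrom_nonneg (hA : ∀ j (v : Fin (d (j + 1)) → ℝ),
      (∀ i, 0 ≤ v i) → ∀ i, 0 ≤ A j v i)
    (i : ℕ) : ∀ (k : ℕ) (v : Fin (d (i + k)) → ℝ),
      (∀ x, 0 ≤ v x) → ∀ x, 0 ≤ compFrom d A i k v x
  | 0, v, hv => by simpa [compFrom] using hv
  | k + 1, v, hv => by
      simp only [compFrom, LinearMap.comp_apply]
      exact compFrom_nonneg hA i k (A (i + k) v) (hA (i + k) v hv)

lemma compFrom_limit (w : ∀ j, Fin (d j) → ℝ)
    (hw : ∀ j, A j (w (j + 1)) = w j) (i : ℕ) :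
    ∀ k : ℕ, compFrom d A i k (w (i + k)) = w i
  | 0 => by simp [compFrom]
  | k + 1 => by
      show compFrom d A i k (A (i + k) (w ((i + k) + 1))) = w i
      rw [hw (i + k)]
      exact compFrom_limit w hw i k

lemma levelCast (w : ∀ j, Fin (d j) → ℝ) {n n' : ℕ} (h : n = n')
    (i : Fin (d n)) : w n i = w n' (Fin.cast (congrArg d h) i) := by
  subst h; rfl

/-- pushing a pointwise inequality down the inverse system -/
lemma push_le (hA : ∀ j (v : Fin (d (j + 1)) → ℝ),
      (∀ i, 0 ≤ v i) → ∀ i, 0 ≤ A j v i)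
    (f g : ∀ j, Fin (d j) → ℝ)
    (hf : ∀ j, A j (f (j + 1)) = f j) (hg : ∀ j, A j (g (j + 1)) = g j)
    (j j' : ℕ) (hjj : j ≤ j')
    (h : ∀ i, f j' i ≤ g j' i) : ∀ i, f j i ≤ g j i := by
  obtain ⟨t, rfl⟩ := Nat.le.dest hjj
  intro i
  have h0 : ∀ x, 0 ≤ (g (j + t) - f (j + t)) x := by
    intro x; simp only [Pi.sub_apply, sub_nonneg]; exact h x
  have h1 := compFrom_nonneg d A hA j t _ h0 i
  rw [map_sub, compFrom_limit d A f hf j t, compFrom_limit d A g hg j t] at h1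
  simpa [sub_nonneg] using h1

lemma push_zero (w : ∀ j, Fin (d j) → ℝ)
    (hw : ∀ j, A j (w (j + 1)) = w j) (j j' : ℕ) (hjj : j ≤ j')
    (h : w j' = 0) : w j = 0 := by
  obtain ⟨t, rfl⟩ := Nat.le.dest hjj
  rw [← compFrom_limit d A w hw j t, h, map_zero]

lemma step_lemma {dd : ℕ} (L : Matrix (Fin dd) (Fin dd) ℝ)
    (J : ℕ → ℕ) (hd : ∀ k, d (J k) = dd)
    (hrec : ∀ k : ℕ, ∃ m : ℕ, ∃ hm : J (2 * k) + m = J (2 * k + 1),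
      ∀ v : Fin dd → ℝ,
        compFrom d A (J (2 * k)) m
            (fun i => v (Fin.cast ((congrArg d hm).trans (hd (2 * k + 1))) i))
          = fun i => L.mulVec v (Fin.cast (hd (2 * k)) i))
    (w : ∀ j, Fin (d j) → ℝ) (hw : ∀ j, A j (w (j + 1)) = w j) (k : ℕ) :
    (fun i : Fin dd => w (J (2 * k)) (Fin.cast (hd (2 * k)).symm i))
      = L.mulVec (fun q => w (J (2 * k + 1)) (Fin.cast (hd (2 * k + 1)).symm q)) := by
  obtain ⟨m, hm, hL⟩ := hrec k
  set v0 : Fin dd → ℝ := fun q => w (J (2 * k + 1)) (Fin.cast (hd (2 * k + 1)).symm q) with hv0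
  have h2 : w (J (2 * k) + m)
      = fun i => v0 (Fin.cast ((congrArg d hm).trans (hd (2 * k + 1))) i) := by
    funext i
    rw [levelCast d w hm i]
    show w (J (2 * k + 1)) _ = w (J (2 * k + 1)) _
    exact congrArg _ (Fin.ext rfl)
  have h1 : compFrom d A (J (2 * k)) m (w (J (2 * k) + m)) = w (J (2 * k)) :=
    compFrom_limit d A w hw _ m
  rw [h2, hL v0] at h1
  funext i
  rw [← congrFun h1 (Fin.cast (hd (2 * k)).symm i)]
  exact congrArg (L.mulVec v0) (Fin.ext rfl)

end CF
/-- Let `(Λ_j, T_j)` be an inverse sequence where `Λ_j` is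
the nonnegative cone in `ℝ^{d_j}` and each `T_j` (here `A j`) is a
nonnegative linear map, and suppose there is a strictly monotone sequence of
(depth) indices `J` with `d (J k) = dd` for all `k`, and a fixed positive
`dd × dd` matrix `L` which equals the composition of the connecting maps from
level `J (2k+1)` down to level `J (2k)` for every `k`.  Then the inverse
limit of the cones is at most one-dimensional: any two of its elements are
nonnegative scalar multiples of a common element. -/
theorem recurring_positive_matrix_unique_ray (d : ℕ → ℕ)
    (A : ∀ j, (Fin (d (j + 1)) → ℝ) →ₗ[ℝ] (Fin (d j) → ℝ))
    (hA : ∀ j (v : Fin (d (j + 1)) → ℝ), (∀ i, 0 ≤ v i) → ∀ i, 0 ≤ A j v i)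
    (dd : ℕ) (L : Matrix (Fin dd) (Fin dd) ℝ) (hLpos : ∀ i j, 0 < L i j)
    (J : ℕ → ℕ) (hJ : StrictMono J) (hd : ∀ k, d (J k) = dd)
    (hrec : ∀ k : ℕ, ∃ m : ℕ, ∃ hm : J (2 * k) + m = J (2 * k + 1),
      ∀ v : Fin dd → ℝ,
        compFrom d A (J (2 * k)) m
            (fun i => v (Fin.cast ((congrArg d hm).trans (hd (2 * k + 1))) i))
          = fun i => L.mulVec v (Fin.cast (hd (2 * k)) i)) :
    ∀ u ∈ {w : ∀ j, Fin (d j) → ℝ |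
        (∀ j i, 0 ≤ w j i) ∧ ∀ j, A j (w (j + 1)) = w j},
      ∀ v ∈ {w : ∀ j, Fin (d j) → ℝ |
          (∀ j i, 0 ≤ w j i) ∧ ∀ j, A j (w (j + 1)) = w j},
        ∃ z ∈ {w : ∀ j, Fin (d j) → ℝ |
            (∀ j i, 0 ≤ w j i) ∧ ∀ j, A j (w (j + 1)) = w j},
          ∃ α β : ℝ, 0 ≤ α ∧ 0 ≤ β ∧ u = α • z ∧ v = β • z := by
  intro u hu v hv
  obtain ⟨hu0, huA⟩ := hu
  obtain ⟨hv0, hvA⟩ := hv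
  by_cases hUz : ∀ j i, u j i = 0
  · refine ⟨v, ⟨hv0, hvA⟩, 0, 1, le_refl 0, zero_le_one, ?_, (one_smul _ _).symm⟩
    funext j x
    simp [hUz j x]
  by_cases hVz : ∀ j i, v j i = 0
  · refine ⟨u, ⟨hu0, huA⟩, 1, 0, zero_le_one, le_refl 0, (one_smul _ _).symm, ?_⟩
    funext j x
    simp [hVz j x]
  push_neg at hUz hVz
  obtain ⟨ju, iu, hju⟩ := hUz
  obtain ⟨jv, iv, hjv⟩ := hVz
  suffices hmain : ∃ c : ℝ, 0 ≤ c ∧ ∀ j x, u j x = c * v j x by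
    obtain ⟨c, hc0, hc⟩ := hmain
    refine ⟨v, ⟨hv0, hvA⟩, c, 1, hc0, zero_le_one, ?_, (one_smul _ _).symm⟩
    funext j x
    simpa using hc j x
  -- limit property of `c • v`
  have hcvA : ∀ (c : ℝ) (j : ℕ), A j ((c • v) (j + 1)) = (c • v) j := by
    intro c j
    show A j (c • v (j + 1)) = c • v j
    rw [map_smul, hvA]
  have hune : ∀ j, ju ≤ j → u j ≠ 0 := fun j hj h =>
    hju (by rw [push_zero d A u huA ju j hj h]; rfl)
  have hvne : ∀ j, jv ≤ j → v j ≠ 0 := fun j hj h =>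
    hjv (by rw [push_zero d A v hvA jv j hj h]; rfl)
  have hJge : ∀ n, n ≤ J n := fun n => hJ.le_apply
  haveI hddne : Nonempty (Fin dd) := by
    have h1 : ju ≤ J (2 * ju + 1) := le_trans (by omega) (hJge (2 * ju + 1))
    obtain ⟨x, -⟩ := Function.ne_iff.1 (hune _ h1)
    exact ⟨Fin.cast (hd (2 * ju + 1)) x⟩
  obtain ⟨i0⟩ := id hddne
  -- entry bounds of L
  set δ : ℝ := Finset.univ.inf' Finset.univ_nonempty
    (fun p : Fin dd × Fin dd => L p.1 p.2) with hδdef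
  set Δ : ℝ := Finset.univ.sup' Finset.univ_nonempty
    (fun p : Fin dd × Fin dd => L p.1 p.2) with hΔdef
  have hδpos : 0 < δ := by
    rw [hδdef]
    exact (Finset.lt_inf'_iff _).2 fun p _ => hLpos p.1 p.2
  have hδle : ∀ i j, δ ≤ L i j := by
    intro i j
    rw [hδdef]
    exact Finset.inf'_le (fun p : Fin dd × Fin dd => L p.1 p.2) (Finset.mem_univ (i, j))
  have hΔge : ∀ i j, L i j ≤ Δ := by
    intro i j
    rw [hΔdef]
    exact Finset.le_sup' (fun p : Fin dd × Fin dd => L p.1 p.2) (Finset.mem_univ (i, j))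
  have hδΔ : δ ≤ Δ := (hδle i0 i0).trans (hΔge i0 i0)
  have hΔpos : 0 < Δ := lt_of_lt_of_le hδpos hδΔ
  set κ : ℝ := 1 - (δ / Δ) ^ 2 with hκdef
  have hκnn : 0 ≤ κ := by
    rw [hκdef]
    have h1 : δ / Δ ≤ 1 := (div_le_one hΔpos).2 hδΔ
    nlinarith [div_nonneg hδpos.le hΔpos.le]
  have hκlt1 : κ < 1 := by
    rw [hκdef]
    have h1 : 0 < δ / Δ := div_pos hδpos hΔpos
    nlinarith
  -- transported sequences
  set U : ℕ → Fin dd → ℝ :=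
    fun k i => u (J (2 * k)) (Fin.cast (hd (2 * k)).symm i) with hUdef
  set V : ℕ → Fin dd → ℝ :=
    fun k i => v (J (2 * k)) (Fin.cast (hd (2 * k)).symm i) with hVdef
  set a : ℕ → Fin dd → ℝ :=
    fun k q => u (J (2 * k + 1)) (Fin.cast (hd (2 * k + 1)).symm q) with hadef
  set b : ℕ → Fin dd → ℝ :=
    fun k q => v (J (2 * k + 1)) (Fin.cast (hd (2 * k + 1)).symm q) with hbdef
  have hstepU : ∀ k, U k = L.mulVec (a k) := fun k =>
    step_lemma d A L J hd hrec u huA k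
  have hstepV : ∀ k, V k = L.mulVec (b k) := fun k =>
    step_lemma d A L J hd hrec v hvA k
  have hUnn : ∀ k i, 0 ≤ U k i := fun k i => hu0 _ _
  have hann : ∀ k i, 0 ≤ a k i := fun k i => hu0 _ _
  have hbnn : ∀ k i, 0 ≤ b k i := fun k i => hv0 _ _
  set k0 : ℕ := max ju jv with hk0def
  have hjuk0 : ju ≤ k0 := le_max_left _ _
  have hjvk0 : jv ≤ k0 := le_max_right _ _
  have hcast : ∀ (m : ℕ) (x : Fin (d (J m))),
      Fin.cast (hd m).symm (Fin.cast (hd m) x) = x := fun m x => Fin.ext rfl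
  have hbne : ∀ k, k0 ≤ k → ∃ i, b k i ≠ 0 := by
    intro k hk
    have h1 : jv ≤ J (2 * k + 1) := le_trans (by omega) (hJge (2 * k + 1))
    obtain ⟨x, hx⟩ := Function.ne_iff.1 (hvne _ h1)
    simp only [Pi.zero_apply] at hx
    refine ⟨Fin.cast (hd (2 * k + 1)) x, ?_⟩
    simp only [hbdef]
    rwa [hcast]
  have hVpos : ∀ k, k0 ≤ k → ∀ i, 0 < V k i := by
    intro k hk i
    rw [hstepV k]
    exact aux_mulVec_pos L hLpos (hbnn k) (hbne k hk) i
  -- extremal ratios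
  set lam : ℕ → ℝ := fun k =>
    Finset.univ.inf' Finset.univ_nonempty (fun i => U k i / V k i) with hlamdef
  set mu : ℕ → ℝ := fun k =>
    Finset.univ.sup' Finset.univ_nonempty (fun i => U k i / V k i) with hmudef
  have hlam_le : ∀ k, k0 ≤ k → ∀ i, lam k * V k i ≤ U k i := by
    intro k hk i
    have h1 : lam k ≤ U k i / V k i := by
      rw [hlamdef]; exact Finset.inf'_le (fun i => U k i / V k i) (Finset.mem_univ i)
    calc lam k * V k i ≤ (U k i / V k i) * V k i :=
          mul_le_mul_of_nonneg_right h1 (hVpos k hk i).le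
      _ = U k i := div_mul_cancel₀ _ (hVpos k hk i).ne'
  have hmu_ge : ∀ k, k0 ≤ k → ∀ i, U k i ≤ mu k * V k i := by
    intro k hk i
    have h1 : U k i / V k i ≤ mu k := by
      rw [hmudef]; exact Finset.le_sup' (fun i => U k i / V k i) (Finset.mem_univ i)
    calc U k i = (U k i / V k i) * V k i := (div_mul_cancel₀ _ (hVpos k hk i).ne').symm
      _ ≤ mu k * V k i := mul_le_mul_of_nonneg_right h1 (hVpos k hk i).le
  have hlam_nn : ∀ k, k0 ≤ k → 0 ≤ lam k := by
    intro k hk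
    rw [hlamdef]
    exact Finset.le_inf' Finset.univ_nonempty (fun i => U k i / V k i)
      fun i _ => div_nonneg (hUnn k i) (hVpos k hk i).le
  -- raw (untransported) versions
  have hrawmu : ∀ k, k0 ≤ k → ∀ x, u (J (2 * k)) x ≤ mu k * v (J (2 * k)) x := by
    intro k hk x
    have h1 := hmu_ge k hk (Fin.cast (hd (2 * k)) x)
    simp only [hUdef, hVdef] at h1
    rwa [hcast] at h1
  have hrawlam : ∀ k, k0 ≤ k → ∀ x, lam k * v (J (2 * k)) x ≤ u (J (2 * k)) x := by
    intro k hk x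
    have h1 := hlam_le k hk (Fin.cast (hd (2 * k)) x)
    simp only [hUdef, hVdef] at h1
    rwa [hcast] at h1
  -- pushing comparisons down
  have hpushUV : ∀ (c : ℝ) (m m' : ℕ), m ≤ m' →
      (∀ x, u m' x ≤ c * v m' x) → ∀ x, u m x ≤ c * v m x := by
    intro c m m' hm h x
    have h1 := push_le d A hA u (c • v) huA (hcvA c) m m' hm
      (fun y => by simpa using h y) x
    simpa using h1
  have hpushVU : ∀ (c : ℝ) (m m' : ℕ), m ≤ m' →
      (∀ x, c * v m' x ≤ u m' x) → ∀ x, c * v m x ≤ u m x := by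
    intro c m m' hm h x
    have h1 := push_le d A hA (c • v) u (hcvA c) huA m m' hm
      (fun y => by simpa using h y) x
    simpa using h1
  have hmu_mono : ∀ k, k0 ≤ k → mu k ≤ mu (k + 1) := by
    intro k hk
    have hraw : ∀ x, u (J (2 * k)) x ≤ mu (k + 1) * v (J (2 * k)) x :=
      hpushUV _ (J (2 * k)) (J (2 * (k + 1))) (hJ.monotone (by omega))
        (hrawmu (k + 1) (by omega))
    rw [hmudef]
    refine Finset.sup'_le Finset.univ_nonempty (fun i => U k i / V k i) fun i _ => ?_
    rw [div_le_iff₀ (hVpos k hk i)]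
    have h2 := hraw (Fin.cast (hd (2 * k)).symm i)
    simpa [hUdef, hVdef] using h2
  have hlam_anti : ∀ k, k0 ≤ k → lam (k + 1) ≤ lam k := by
    intro k hk
    have hraw : ∀ x, lam (k + 1) * v (J (2 * k)) x ≤ u (J (2 * k)) x :=
      hpushVU _ (J (2 * k)) (J (2 * (k + 1))) (hJ.monotone (by omega))
        (hrawlam (k + 1) (by omega))
    rw [hlamdef]
    refine Finset.le_inf' Finset.univ_nonempty (fun i => U k i / V k i) fun i _ => ?_
    rw [le_div_iff₀ (hVpos k hk i)]
    have h2 := hraw (Fin.cast (hd (2 * k)).symm i)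
    simpa [hUdef, hVdef] using h2
  -- comparisons at the intermediate levels J (2k+1)
  have hab_lam : ∀ k, k0 ≤ k → ∀ q, lam (k + 1) * b k q ≤ a k q := by
    intro k hk q
    have hraw := hpushVU _ (J (2 * k + 1)) (J (2 * (k + 1))) (hJ.monotone (by omega))
      (hrawlam (k + 1) (by omega))
    have h2 := hraw (Fin.cast (hd (2 * k + 1)).symm q)
    simpa [hadef, hbdef] using h2
  have hab_mu : ∀ k, k0 ≤ k → ∀ q, a k q ≤ mu (k + 1) * b k q := by
    intro k hk q
    have hraw := hpushUV _ (J (2 * k + 1)) (J (2 * (k + 1))) (hJ.monotone (by omega))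
      (hrawmu (k + 1) (by omega))
    have h2 := hraw (Fin.cast (hd (2 * k + 1)).symm q)
    simpa [hadef, hbdef] using h2
  -- one-step contraction
  have hcontract : ∀ k, k0 ≤ k →
      mu k - lam k ≤ κ * (mu (k + 1) - lam (k + 1)) := by
    intro k hk
    obtain ⟨is, -, his⟩ := Finset.exists_mem_eq_sup'
      (Finset.univ_nonempty) (fun i => U k i / V k i)
    obtain ⟨js, -, hjs⟩ := Finset.exists_mem_eq_inf'
      (Finset.univ_nonempty) (fun i => U k i / V k i)
    have hmueq : mu k = U k is / V k is := by rw [hmudef]; exact his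
    have hlameq : lam k = U k js / V k js := by rw [hlamdef]; exact hjs
    rw [hκdef, hmueq, hlameq, hstepU k, hstepV k]
    exact aux_contract L hδpos hδle hΔge (hbnn k) (hbne k hk)
      (hab_lam k hk) (hab_mu k hk) is js
  -- uniform bound on the gap
  have hKge1 : 1 ≤ Δ ^ 2 / δ ^ 2 := by
    rw [le_div_iff₀ (pow_pos hδpos 2)]
    nlinarith
  have hbound : ∀ k, k0 ≤ k → mu k ≤ (Δ ^ 2 / δ ^ 2) * lam k := by
    intro k hk
    obtain ⟨is, -, his⟩ := Finset.exists_mem_eq_sup'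
      (Finset.univ_nonempty) (fun i => U k i / V k i)
    obtain ⟨js, -, hjs⟩ := Finset.exists_mem_eq_inf'
      (Finset.univ_nonempty) (fun i => U k i / V k i)
    have hmueq : mu k = U k is / V k is := by rw [hmudef]; exact his
    have hlameq : lam k = U k js / V k js := by rw [hlamdef]; exact hjs
    rw [hmueq, hlameq, hstepU k, hstepV k]
    exact aux_ratio L hδpos hδle hΔge (hann k) (hbnn k) (hbne k hk) is js
  have hlam_chain : ∀ k, k0 ≤ k → lam k ≤ lam k0 := by
    intro k hk
    induction k, hk using Nat.le_induction with
    | base => exact le_rfl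
    | succ n hn ih => exact le_trans (hlam_anti n hn) ih
  have hmu_chain : ∀ k, k0 ≤ k → mu k0 ≤ mu k := by
    intro k hk
    induction k, hk using Nat.le_induction with
    | base => exact le_rfl
    | succ n hn ih => exact le_trans ih (hmu_mono n hn)
  set G : ℝ := (Δ ^ 2 / δ ^ 2 - 1) * lam k0 with hGdef
  have hgapG : ∀ k, k0 ≤ k → mu k - lam k ≤ G := by
    intro k hk
    have h1 := hbound k hk
    have h2 := hlam_chain k hk
    have h3 := hlam_nn k hk
    have h4 : (0:ℝ) ≤ Δ ^ 2 / δ ^ 2 - 1 := by linarith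
    have h5 := mul_le_mul_of_nonneg_left h2 h4
    rw [hGdef]
    nlinarith
  have hgeo : ∀ n k, k0 ≤ k → mu k - lam k ≤ κ ^ n * G := by
    intro n
    induction n with
    | zero => intro k hk; simpa using hgapG k hk
    | succ n ih =>
        intro k hk
        calc mu k - lam k ≤ κ * (mu (k + 1) - lam (k + 1)) := hcontract k hk
          _ ≤ κ * (κ ^ n * G) :=
              mul_le_mul_of_nonneg_left (ih (k + 1) (by omega)) hκnn
          _ = κ ^ (n + 1) * G := by ring
  have hgap0 : ∀ k, k0 ≤ k → mu k = lam k := by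
    intro k hk
    have hle : mu k - lam k ≤ 0 := by
      have htend : Filter.Tendsto (fun n => κ ^ n * G) Filter.atTop (nhds 0) := by
        have h4 := tendsto_pow_atTop_nhds_zero_of_lt_one hκnn hκlt1
        simpa using h4.mul_const G
      exact ge_of_tendsto htend (Filter.Eventually.of_forall fun n => hgeo n k hk)
    have hge : lam k ≤ mu k := by
      calc lam k ≤ U k i0 / V k i0 := by
            rw [hlamdef]
            exact Finset.inf'_le (fun i => U k i / V k i) (Finset.mem_univ i0)
        _ ≤ mu k := by
            rw [hmudef]
            exact Finset.le_sup' (fun i => U k i / V k i) (Finset.mem_univ i0)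
    linarith
  have hlamconst : ∀ k, k0 ≤ k → lam k = lam k0 := by
    intro k hk
    have h1 := hlam_chain k hk
    have h2 := hmu_chain k hk
    have h3 := hgap0 k hk
    have h4 := hgap0 k0 le_rfl
    linarith
  refine ⟨lam k0, hlam_nn k0 le_rfl, ?_⟩
  have hUVk : ∀ k, k0 ≤ k → ∀ x, u (J (2 * k)) x = lam k0 * v (J (2 * k)) x := by
    intro k hk x
    have h1 := hrawlam k hk x
    have h2 := hrawmu k hk x
    rw [hlamconst k hk] at h1
    rw [hgap0 k hk, hlamconst k hk] at h2
    have h3 : 0 ≤ v (J (2 * k)) x := hv0 _ _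
    linarith
  intro j x
  have hjk : j ≤ J (2 * max k0 j) := by
    have h1 : j ≤ max k0 j := le_max_right _ _
    exact le_trans (by omega) (hJge (2 * max k0 j))
  have h1 : ∀ y, u (J (2 * max k0 j)) y ≤ lam k0 * v (J (2 * max k0 j)) y :=
    fun y => (hUVk (max k0 j) (le_max_left _ _) y).le
  have h2 : ∀ y, lam k0 * v (J (2 * max k0 j)) y ≤ u (J (2 * max k0 j)) y :=
    fun y => (hUVk (max k0 j) (le_max_left _ _) y).ge
  have h3 := push_le d A hA u (lam k0 • v) huA (hcvA _) j (J (2 * max k0 j)) hjk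
    (fun y => by simpa using h1 y) x
  have h4 := push_le d A hA (lam k0 • v) u (hcvA _) huA j (J (2 * max k0 j)) hjk
    (fun y => by simpa using h2 y) x
  simp only [Pi.smul_apply, smul_eq_mul] at h3 h4
  linarith
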